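/- Let X be a geodesic metric space that is δ-hyperbolic with δ > 0, let C ⊆ X be a ρ-separated subset with ρ ≥ 20δ, and fix R with 2 + 2δ ≤ R ≤ ρ/2 − 3δ. Then the Behrstock inequality (axiom (P2)) holds for the projection distances {d_p}_{p∈C} with projection constant 4δ: for pairwise distinct a, b, c ∈ C, if d_a(b,c) > 4δ then d_b(a,c) ≤ 4δ. -/
import Mathlib


open Set

/-- A geodesic from `x` to `y`: an isometric embedding of `[0, dist x y]` with the
prescribed endpoints. -/
def IsGeodesicFrom {X : Type*} [MetricSpace X] (γ : ℝ → X) (x y : X) : Prop :=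
  γ 0 = x ∧ γ (dist x y) = y ∧
    ∀ s ∈ Icc (0:ℝ) (dist x y), ∀ t ∈ Icc (0:ℝ) (dist x y), dist (γ s) (γ t) = |s - t|

/-- A geodesic metric space: every pair of points is joined by a geodesic. -/
def GeodesicMetricSpace (X : Type*) [MetricSpace X] : Prop :=
  ∀ x y : X, ∃ γ : ℝ → X, IsGeodesicFrom γ x y

/-- The Gromov product `(b,c)_a`. -/
noncomputable def gromovProd {X : Type*} [MetricSpace X] (a b c : X) : ℝ :=
  (dist a b + dist a c - dist b c) / 2

/-- `δ`-hyperbolicity via `δ`-thin triangles: two sides of a geodesic triangle issuing from a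
common vertex stay `δ`-close up to the Gromov product (this is exactly the condition that
pairs of points of the triangle with the same image in the comparison tripod are `δ`-close). -/
def DeltaThin (X : Type*) [MetricSpace X] (δ : ℝ) : Prop :=
  ∀ (a b c : X) (γ₁ γ₂ : ℝ → X), IsGeodesicFrom γ₁ a b → IsGeodesicFrom γ₂ a c →
    ∀ t ∈ Icc (0:ℝ) (gromovProd a b c), dist (γ₁ t) (γ₂ t) ≤ δ

/-- A subset `C` is `ρ`-separated if distinct points of `C` are at distance at least `ρ`. -/
def Separated {X : Type*} [MetricSpace X] (C : Set X) (ρ : ℝ) : Prop :=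
  ∀ c ∈ C, ∀ c' ∈ C, c ≠ c' → ρ ≤ dist c c'

open scoped ENNReal

/-- The path metric of `X ∖ B_R(p)`: the distance from `u` to `v` is the infimum of the
lengths (total variations) of continuous paths from `u` to `v` avoiding the open ball
`B_R(p)`, and `∞` if there is no such path. -/
noncomputable def pathDist {X : Type*} [MetricSpace X] (p : X) (R : ℝ) (u v : X) : ℝ≥0∞ :=
  ⨅ γ ∈ {γ : ℝ → X | ContinuousOn γ (Icc 0 1) ∧ γ 0 = u ∧ γ 1 = v ∧
      ∀ t ∈ Icc (0:ℝ) 1, R ≤ dist (γ t) p},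
    eVariationOn γ (Icc (0:ℝ) 1)

/-- The projection `π_p(a)`: the set of points in which geodesics from `p` to `a` meet the
sphere `S_p = ∂B_R(p)`. -/
def projSet {X : Type*} [MetricSpace X] (p : X) (R : ℝ) (a : X) : Set X :=
  {x : X | dist x p = R ∧
    ∃ γ : ℝ → X, IsGeodesicFrom γ p a ∧ ∃ t ∈ Icc (0:ℝ) (dist p a), γ t = x}

/-- The projection distance `d_p(a,b) = diam(π_p(a) ∪ π_p(b))`, the diameter being taken in
the path metric of `X ∖ B_R(p)`. -/
noncomputable def projDist {X : Type*} [MetricSpace X] (p : X) (R : ℝ) (a b : X) : ℝ≥0∞ :=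
  ⨆ x ∈ projSet p R a ∪ projSet p R b, ⨆ y ∈ projSet p R a ∪ projSet p R b,
    pathDist p R x y


set_option maxHeartbeats 1000000

lemma dist_geodesic {X : Type*} [MetricSpace X] {γ : ℝ → X} {x y : X}
    (h : IsGeodesicFrom γ x y) {t : ℝ} (ht : t ∈ Icc (0:ℝ) (dist x y)) :
    dist x (γ t) = t := by
  have h0 : (0:ℝ) ∈ Icc (0:ℝ) (dist x y) := ⟨le_refl 0, dist_nonneg⟩
  have := h.2.2 0 h0 t ht
  rw [h.1] at this
  rw [this, abs_of_nonpos (by linarith [ht.1])]; ring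

lemma gromov_le_dist {X : Type*} [MetricSpace X] (p u v : X) :
    gromovProd p u v ≤ dist p u := by
  have := dist_triangle p u v
  unfold gromovProd; linarith

lemma pathDist_le_of_gromov {X : Type*} [MetricSpace X] {δ R : ℝ} (hδ : 0 < δ) (hR : 0 ≤ R)
    (hgeo : GeodesicMetricSpace X) (hthin : DeltaThin X δ)
    {p u v x y : X} (h : R + δ ≤ gromovProd p u v)
    (hx : x ∈ projSet p R u) (hy : y ∈ projSet p R v) :
    pathDist p R x y ≤ ENNReal.ofReal (3 * δ) := by
  obtain ⟨hxp, γ₁, hγ₁, t₁, ht₁, hxt₁⟩ := hx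
  obtain ⟨hyp, γ₂, hγ₂, t₂, ht₂, hyt₂⟩ := hy
  have hD₁ : R + δ ≤ dist p u := h.trans (gromov_le_dist p u v)
  have hD₂ : R + δ ≤ dist p v := by
    have h1 := dist_triangle p v u
    have h2 : dist u v = dist v u := dist_comm u v
    have : gromovProd p u v ≤ dist p v := by unfold gromovProd; linarith
    exact h.trans this
  have ht₁R : t₁ = R := by
    have := dist_geodesic hγ₁ ht₁
    rw [hxt₁, dist_comm] at this; rw [← this, hxp]
  have ht₂R : t₂ = R := by
    have := dist_geodesic hγ₂ ht₂
    rw [hyt₂, dist_comm] at this; rw [← this, hyp]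
  set u' := γ₁ (R + δ) with hu'
  set v' := γ₂ (R + δ) with hv'
  have hmem₁ : ∀ s : ℝ, 0 ≤ s → s ≤ δ → R + s ∈ Icc (0:ℝ) (dist p u) := by
    intro s h0 h1; exact ⟨by linarith, by linarith⟩
  have hmem₂ : ∀ s : ℝ, 0 ≤ s → s ≤ δ → R + s ∈ Icc (0:ℝ) (dist p v) := by
    intro s h0 h1; exact ⟨by linarith, by linarith⟩
  have hL : dist u' v' ≤ δ :=
    hthin p u v γ₁ γ₂ hγ₁ hγ₂ (R + δ) ⟨by linarith, h⟩
  obtain ⟨σ, hσ⟩ := hgeo u' v'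
  set L := dist u' v' with hLdef
  have hL0 : 0 ≤ L := dist_nonneg
  -- the path
  set φ : ℝ → X := fun t =>
    if t ≤ 1/3 then γ₁ (R + 3*t*δ)
    else if t ≤ 2/3 then σ ((3*t - 1) * L)
    else γ₂ (R + δ - (3*t - 2) * δ) with hφ
  have val1 : ∀ t : ℝ, t ≤ 1/3 → φ t = γ₁ (R + 3*t*δ) := by
    intro t ht; simp only [hφ, if_pos ht]
  have val2 : ∀ t : ℝ, 1/3 ≤ t → t ≤ 2/3 → φ t = σ ((3*t - 1) * L) := by
    intro t h1 h2
    rcases eq_or_lt_of_le h1 with h1 | h1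
    · rw [val1 t (le_of_eq h1.symm), ← h1]
      have : (3*(1/3:ℝ) - 1) * L = 0 := by ring
      rw [this, hσ.1, hu']
      norm_num
    · simp only [hφ, if_neg (not_le.mpr h1), if_pos h2]
  have val3 : ∀ t : ℝ, 2/3 ≤ t → φ t = γ₂ (R + δ - (3*t - 2) * δ) := by
    intro t h2
    rcases eq_or_lt_of_le h2 with h2 | h2
    · rw [val2 t (by linarith [h2.symm ▸ le_refl t]) (le_of_eq h2.symm), ← h2]
      have e1 : (3*(2/3:ℝ) - 1) * L = dist u' v' := by rw [← hLdef]; ring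
      rw [e1, hσ.2.1, hv']
      norm_num
    · have h1 : ¬ t ≤ 1/3 := by push_neg; linarith
      simp only [hφ, if_neg h1, if_neg (not_le.mpr h2)]
  -- piecewise distance bounds
  have A : ∀ s t : ℝ, 0 ≤ s → s ≤ t → t ≤ 1/3 → dist (φ s) (φ t) ≤ 3*δ*(t - s) := by
    intro s t h0 hst h3
    rw [val1 s (hst.trans h3), val1 t h3]
    rw [hγ₁.2.2 _ (hmem₁ (3*s*δ) (by nlinarith) (by nlinarith))
        _ (hmem₁ (3*t*δ) (by nlinarith) (by nlinarith))]
    rw [abs_of_nonpos (by nlinarith)]; nlinarith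
  have B : ∀ s t : ℝ, 1/3 ≤ s → s ≤ t → t ≤ 2/3 → dist (φ s) (φ t) ≤ 3*δ*(t - s) := by
    intro s t h1 hst h2
    rw [val2 s h1 (hst.trans h2), val2 t (h1.trans hst) h2]
    have hm : ∀ r : ℝ, 1/3 ≤ r → r ≤ 2/3 → (3*r - 1) * L ∈ Icc (0:ℝ) (dist u' v') := by
      intro r hr1 hr2; rw [← hLdef]
      constructor
      · nlinarith
      · nlinarith
    rw [hσ.2.2 _ (hm s h1 (hst.trans h2)) _ (hm t (h1.trans hst) h2)]
    rw [abs_of_nonpos (by nlinarith)]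
    nlinarith
  have Cc : ∀ s t : ℝ, 2/3 ≤ s → s ≤ t → t ≤ 1 → dist (φ s) (φ t) ≤ 3*δ*(t - s) := by
    intro s t h2 hst h1
    rw [val3 s h2, val3 t (h2.trans hst)]
    have hm : ∀ r : ℝ, 2/3 ≤ r → r ≤ 1 → R + δ - (3*r - 2) * δ ∈ Icc (0:ℝ) (dist p v) := by
      intro r hr1 hr2
      constructor
      · nlinarith
      · nlinarith
    rw [hγ₂.2.2 _ (hm s h2 (hst.trans h1)) _ (hm t (h2.trans hst) h1)]
    rw [abs_of_nonneg (by nlinarith)]; nlinarith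
  have key : ∀ s ∈ Icc (0:ℝ) 1, ∀ t ∈ Icc (0:ℝ) 1, s ≤ t → dist (φ s) (φ t) ≤ 3*δ*(t - s) := by
    rintro s ⟨hs0, hs1⟩ t ⟨ht0, ht1⟩ hst
    rcases le_or_gt t (1/3) with c1 | c1
    · exact A s t hs0 hst c1
    rcases le_or_gt s (1/3) with c2 | c2
    · -- s ≤ 1/3 < t
      rcases le_or_gt t (2/3) with c3 | c3
      · calc dist (φ s) (φ t) ≤ dist (φ s) (φ (1/3)) + dist (φ (1/3)) (φ t) := dist_triangle _ _ _
          _ ≤ 3*δ*(1/3 - s) + 3*δ*(t - 1/3) :=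
            add_le_add (A s (1/3) hs0 c2 le_rfl) (B (1/3) t le_rfl c1.le c3)
          _ = 3*δ*(t - s) := by ring
      · calc dist (φ s) (φ t)
            ≤ dist (φ s) (φ (1/3)) + (dist (φ (1/3)) (φ (2/3)) + dist (φ (2/3)) (φ t)) := by
              have := dist_triangle (φ s) (φ (1/3)) (φ t)
              have := dist_triangle (φ (1/3)) (φ (2/3)) (φ t)
              linarith
          _ ≤ 3*δ*(1/3 - s) + (3*δ*(2/3 - 1/3) + 3*δ*(t - 2/3)) := by
              have hA := A s (1/3) hs0 c2 le_rfl
              have hB := B (1/3) (2/3) le_rfl (by norm_num) le_rfl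
              have hC := Cc (2/3) t le_rfl c3.le ht1
              have hBB : dist (φ (1/3)) (φ (2/3)) ≤ 3*δ*(2/3 - 1/3) := by
                refine hB.trans (le_of_eq ?_); norm_num
              exact add_le_add hA (add_le_add hBB hC)
          _ = 3*δ*(t - s) := by ring
    · rcases le_or_gt t (2/3) with c3 | c3
      · exact B s t c2.le hst c3
      rcases le_or_gt s (2/3) with c4 | c4
      · calc dist (φ s) (φ t) ≤ dist (φ s) (φ (2/3)) + dist (φ (2/3)) (φ t) := dist_triangle _ _ _
          _ ≤ 3*δ*(2/3 - s) + 3*δ*(t - 2/3) :=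
            add_le_add (B s (2/3) c2.le c4 le_rfl) (Cc (2/3) t le_rfl c3.le ht1)
          _ = 3*δ*(t - s) := by ring
      · exact Cc s t c4.le hst ht1
  -- Lipschitz
  have hlip : LipschitzOnWith (Real.toNNReal (3*δ)) φ (Icc (0:ℝ) 1) := by
    rw [lipschitzOnWith_iff_dist_le_mul]
    intro a ha b hb
    have hcoe : ((Real.toNNReal (3*δ) : NNReal) : ℝ) = 3*δ := Real.coe_toNNReal _ (by linarith)
    rw [hcoe, Real.dist_eq]
    rcases le_total a b with hab | hab
    · rw [abs_of_nonpos (by linarith)]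
      have := key a ha b hb hab; linarith
    · rw [abs_of_nonneg (by linarith), dist_comm]
      have := key b hb a ha hab; linarith
  -- membership in the path set
  have hmemφ : φ ∈ {γ : ℝ → X | ContinuousOn γ (Icc 0 1) ∧ γ 0 = x ∧ γ 1 = y ∧
      ∀ t ∈ Icc (0:ℝ) 1, R ≤ dist (γ t) p} := by
    refine ⟨hlip.continuousOn, ?_, ?_, ?_⟩
    · rw [val1 0 (by norm_num)]
      have : R + 3*(0:ℝ)*δ = R := by ring
      rw [this, ← ht₁R, hxt₁]
    · rw [val3 1 (by norm_num)]
      have : R + δ - (3*(1:ℝ) - 2)*δ = R := by ring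
      rw [this, ← ht₂R, hyt₂]
    · rintro t ⟨ht0, ht1'⟩
      rcases le_or_gt t (1/3) with c1 | c1
      · rw [val1 t c1, dist_comm]
        rw [dist_geodesic hγ₁ (hmem₁ (3*t*δ) (by nlinarith) (by nlinarith))]
        nlinarith
      rcases le_or_gt t (2/3) with c2 | c2
      · rw [val2 t c1.le c2]
        have hdu : dist u' (σ ((3*t - 1) * L)) = (3*t - 1) * L := by
          have h0m : (0:ℝ) ∈ Icc (0:ℝ) (dist u' v') := ⟨le_rfl, dist_nonneg⟩
          have htm : (3*t - 1) * L ∈ Icc (0:ℝ) (dist u' v') := by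
            rw [← hLdef]; constructor
            · nlinarith
            · nlinarith
          have := hσ.2.2 0 h0m _ htm
          rw [hσ.1] at this
          rw [this, abs_of_nonpos (by nlinarith)]; ring
        have hup : dist p u' = R + δ := dist_geodesic hγ₁ (hmem₁ δ hδ.le le_rfl)
        have htri := dist_triangle p (σ ((3*t - 1) * L)) u'
        have hσu : dist (σ ((3*t - 1) * L)) u' = (3*t - 1) * L := by
          rw [dist_comm]; exact hdu
        have hpσ : dist p (σ ((3*t - 1) * L)) = dist (σ ((3*t - 1) * L)) p := dist_comm _ _
        have hLb : (3*t - 1) * L ≤ δ := by nlinarith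
        linarith
      · rw [val3 t c2.le, dist_comm]
        rw [dist_geodesic hγ₂ (by
          have : R + δ - (3*t - 2)*δ = R + (δ - (3*t-2)*δ) := by ring
          rw [this]
          exact hmem₂ _ (by nlinarith) (by nlinarith))]
        nlinarith
  -- variation bound
  have hvar : eVariationOn φ (Icc (0:ℝ) 1) ≤ ENNReal.ofReal (3*δ) := by
    have hid : eVariationOn (id : ℝ → ℝ) (Icc (0:ℝ) 1) ≤ 1 := by
      have := MonotoneOn.eVariationOn_le (f := (id : ℝ → ℝ)) (s := Icc (0:ℝ) 1)
        (monotoneOn_id) (a := 0) (b := 1) ⟨le_rfl, zero_le_one⟩ ⟨zero_le_one, le_rfl⟩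
      rw [Set.inter_self] at this
      simpa using this
    have hcomp := hlip.comp_eVariationOn_le (g := (id : ℝ → ℝ)) (s := Icc (0:ℝ) 1)
      (mapsTo_id _)
    have : eVariationOn (φ ∘ id) (Icc (0:ℝ) 1) = eVariationOn φ (Icc (0:ℝ) 1) := rfl
    rw [this] at hcomp
    refine hcomp.trans ?_
    calc (Real.toNNReal (3*δ) : ℝ≥0∞) * eVariationOn (id : ℝ → ℝ) (Icc (0:ℝ) 1)
        ≤ (Real.toNNReal (3*δ) : ℝ≥0∞) * 1 := mul_le_mul_right hid _
      _ = ENNReal.ofReal (3*δ) := by rw [mul_one]; rfl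
  calc pathDist p R x y ≤ eVariationOn φ (Icc (0:ℝ) 1) := by
        exact iInf₂_le φ hmemφ
    _ ≤ ENNReal.ofReal (3*δ) := hvar


lemma gromov_comm {X : Type*} [MetricSpace X] (p u v : X) :
    gromovProd p u v = gromovProd p v u := by
  unfold gromovProd; rw [dist_comm u v]; ring

lemma projDist_le_of_gromov {X : Type*} [MetricSpace X] {δ R : ℝ} (hδ : 0 < δ) (hR : 0 ≤ R)
    (hgeo : GeodesicMetricSpace X) (hthin : DeltaThin X δ)
    {p u v : X} (h : R + δ ≤ gromovProd p u v) :
    projDist p R u v ≤ ENNReal.ofReal (4 * δ) := by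
  have h34 : ENNReal.ofReal (3 * δ) ≤ ENNReal.ofReal (4 * δ) :=
    ENNReal.ofReal_le_ofReal (by linarith)
  have huu' : gromovProd p u u = dist p u := by unfold gromovProd; rw [dist_self]; ring
  have hvv' : gromovProd p v v = dist p v := by unfold gromovProd; rw [dist_self]; ring
  have hvu : R + δ ≤ gromovProd p v u := by rw [← gromov_comm]; exact h
  have huu : R + δ ≤ gromovProd p u u := by
    rw [huu']; exact h.trans (gromov_le_dist p u v)
  have hvv : R + δ ≤ gromovProd p v v := by
    rw [hvv']; exact hvu.trans (gromov_le_dist p v u)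
  refine iSup₂_le ?_
  intro x hx
  refine iSup₂_le ?_
  intro y hy
  rcases hx with hx | hx <;> rcases hy with hy | hy
  · exact (pathDist_le_of_gromov hδ hR hgeo hthin huu hx hy).trans h34
  · exact (pathDist_le_of_gromov hδ hR hgeo hthin h hx hy).trans h34
  · exact (pathDist_le_of_gromov hδ hR hgeo hthin hvu hx hy).trans h34
  · exact (pathDist_le_of_gromov hδ hR hgeo hthin hvv hx hy).trans h34

/-- **The Behrstock inequality (P2)** for the associated projection distances, with
projection constant `4δ`: for pairwise distinct `a, b, c ∈ C`, if `d_a(b,c) > 4δ` then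
`d_b(a,c) ≤ 4δ`. -/
theorem statement6 {X : Type*} [MetricSpace X]
    (δ ρ R : ℝ) (hδ : 0 < δ)
    (hgeo : GeodesicMetricSpace X) (hthin : DeltaThin X δ)
    (C : Set X) (hsep : Separated C ρ) (hρ : 20 * δ ≤ ρ)
    (hR₁ : 2 + 2 * δ ≤ R) (hR₂ : R ≤ ρ / 2 - 3 * δ) :
    ∀ a ∈ C, ∀ b ∈ C, ∀ c ∈ C, a ≠ b → a ≠ c → b ≠ c →
      ENNReal.ofReal (4 * δ) < projDist a R b c →
      projDist b R a c ≤ ENNReal.ofReal (4 * δ) := by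
  
  intro a ha b hb c hc hab hac hbc hbig
  have hR0 : (0:ℝ) ≤ R := by linarith
  have hab' : ρ ≤ dist a b := hsep a ha b hb hab
  have hcontra : gromovProd a b c < R + δ := by
    by_contra hcon
    push_neg at hcon
    exact absurd (projDist_le_of_gromov hδ hR0 hgeo hthin hcon) (not_le.mpr hbig)
  have hsum : gromovProd b a c = dist a b - gromovProd a b c := by
    unfold gromovProd; rw [dist_comm b a]; ring
  have hfinal : R + δ ≤ gromovProd b a c := by rw [hsum]; linarith
  exact projDist_le_of_gromov hδ hR0 hgeo hthin hfinal
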